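/- Let l ≥ 1, let v : Fin l → ℤ be a nonzero vector with greatest common divisor d > 0 of its entries, and write v = d • v' where v' is primitive. Then there exists an l × l integer matrix M, invertible over ℤ (det M = ±1), with first row equal to v', such that for every additive abelian group A the automorphism of Fin l → A induced by M (namely x ↦ (∑_j M_{ij} • x_j)_i) maps the subgroup {x : ∑_i v_i • x_i = 0} bijectively onto the subgroup {y : d • (y 0) = 0}. -/

import Mathlib

universe u

open Finset in
lemma gcd_eq_combo {ι : Type*} [DecidableEq ι] (s : Finset ι) (f : ι → ℤ) :
    ∃ u : ι → ℤ, s.gcd f = ∑ i ∈ s, f i * u i := by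
  classical
  induction s using Finset.induction_on with
  | empty => exact ⟨0, by simp⟩
  | @insert a s ha ih =>
    obtain ⟨u, hu⟩ := ih
    set p := Int.gcdA (f a) (s.gcd f) with hp
    set q := Int.gcdB (f a) (s.gcd f) with hq
    have hpq : GCDMonoid.gcd (f a) (s.gcd f) = f a * p + (s.gcd f) * q := by
      rw [← Int.coe_gcd, Int.gcd_eq_gcd_ab]
    refine ⟨fun i => if i = a then p else q * u i, ?_⟩
    rw [Finset.gcd_insert, hpq, Finset.sum_insert ha]
    have h2 : ∑ i ∈ s, f i * (if i = a then p else q * u i) = q * (s.gcd f) := by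
      rw [hu, Finset.mul_sum]
      refine Finset.sum_congr rfl fun i hi => ?_
      rw [if_neg (fun h : i = a => ha (h ▸ hi))]; ring
    simp only [h2, if_pos rfl, if_true]
    ring

lemma cons_linear_aux (n : ℕ) :
    ∃ e : (ℤ × (Fin n → ℤ)) ≃ₗ[ℤ] (Fin (n + 1) → ℤ), ∀ p, e p 0 = p.1 := by
  refine ⟨{ toFun := fun p => Fin.cons p.1 p.2
            invFun := fun y => (y 0, Fin.tail y)
            map_add' := by
              intro p q
              funext i
              induction i using Fin.cases <;> simp
            map_smul' := by
              intro c p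
              funext i
              induction i using Fin.cases <;> simp
            left_inv := by intro p; simp [Fin.tail_cons]
            right_inv := by intro y; simp [Fin.cons_self_tail] }, fun p => by simp⟩

/-- There is a linear automorphism of `ℤ^(n+1)` whose 0-th coordinate is `x ↦ ∑ v' i * x i`,
provided `v'` is primitive. -/
lemma exists_automorphism (n : ℕ) (v' : Fin (n + 1) → ℤ)
    (hco : ∃ u : Fin (n + 1) → ℤ, ∑ i, v' i * u i = 1) :
    ∃ f : (Fin (n + 1) → ℤ) ≃ₗ[ℤ] (Fin (n + 1) → ℤ),
      ∀ x, f x 0 = ∑ i, v' i * x i := by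
  classical
  obtain ⟨u, hu⟩ := hco
  set φ : (Fin (n + 1) → ℤ) →ₗ[ℤ] ℤ :=
    ∑ i, v' i • (LinearMap.proj i : (Fin (n + 1) → ℤ) →ₗ[ℤ] ℤ) with hφ
  have hφx : ∀ x, φ x = ∑ i, v' i * x i := by
    intro x
    simp [hφ, LinearMap.sum_apply, smul_eq_mul]
  have hφu : φ u = 1 := by rw [hφx, hu]
  set K := LinearMap.ker φ with hK
  have hker : ∀ x : Fin (n + 1) → ℤ, x - φ x • u ∈ K := by
    intro x
    simp only [hK, LinearMap.mem_ker, map_sub, map_smul, hφu, smul_eq_mul, mul_one, sub_self]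
  -- the splitting  ℤ^(n+1) ≃ ℤ × K
  let e1 : (Fin (n + 1) → ℤ) ≃ₗ[ℤ] ℤ × K :=
    { toFun := fun x => (φ x, ⟨x - φ x • u, hker x⟩)
      invFun := fun p => p.1 • u + (p.2 : Fin (n + 1) → ℤ)
      map_add' := by
        intro x y
        refine Prod.ext (map_add φ x y) (Subtype.ext ?_)
        show (x + y) - φ (x + y) • u = (x - φ x • u) + (y - φ y • u)
        rw [map_add, add_smul]
        abel
      map_smul' := by
        intro c x
        refine Prod.ext (map_smul φ c x) (Subtype.ext ?_)
        show c • x - φ (c • x) • u = c • (x - φ x • u)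
        rw [map_smul, smul_eq_mul, mul_smul, smul_sub]
      left_inv := by
        intro x
        show φ x • u + (x - φ x • u) = x
        abel
      right_inv := by
        rintro ⟨m, k, hk⟩
        have hφk : φ k = 0 := hk
        have hm : φ (m • u + k) = m := by
          rw [map_add, map_smul, hφu, hφk, smul_eq_mul, mul_one, add_zero]
        refine Prod.ext hm (Subtype.ext ?_)
        show (m • u + k) - φ (m • u + k) • u = k
        rw [hm]
        abel }
  have he1 : ∀ x, (e1 x).1 = φ x := fun x => rfl
  have hfst : ∀ (bK : Module.Basis (Fin n) ℤ K) (p : ℤ × K),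
      (((LinearEquiv.refl ℤ ℤ).prodCongr bK.equivFun) p).1 = p.1 := fun _ _ => rfl
  -- K is finite free of rank n
  have hrange : LinearMap.range φ = ⊤ := by
    rw [LinearMap.range_eq_top]
    intro m
    exact ⟨m • u, by rw [map_smul, hφu, smul_eq_mul, mul_one]⟩
  have hrank : Module.finrank ℤ K = n := by
    have h1 : Module.finrank ℤ (ℤ × K) = n + 1 := by
      rw [← e1.finrank_eq, Module.finrank_fin_fun]
    rw [Module.finrank_prod, Module.finrank_self] at h1
    omega
  let bK : Module.Basis (Fin n) ℤ K := Module.finBasisOfFinrankEq ℤ K hrank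
  obtain ⟨e3, he3⟩ := cons_linear_aux n
  refine ⟨e1.trans (((LinearEquiv.refl ℤ ℤ).prodCongr bK.equivFun).trans e3), fun x => ?_⟩
  rw [LinearEquiv.trans_apply, LinearEquiv.trans_apply, he3, hfst, he1, hφx]

/-- The action of an integer matrix on `A^l`. -/
lemma act_mul {l : ℕ} (M N : Matrix (Fin l) (Fin l) ℤ) {A : Type u} [AddCommGroup A]
    (x : Fin l → A) (i : Fin l) :
    ∑ j, (M * N) i j • x j = ∑ k, M i k • ∑ j, N k j • x j := by
  simp only [Matrix.mul_apply, Finset.sum_smul, Finset.smul_sum, mul_smul]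
  exact Finset.sum_comm

lemma act_one {l : ℕ} {A : Type u} [AddCommGroup A] (x : Fin l → A) (i : Fin l) :
    ∑ j, (1 : Matrix (Fin l) (Fin l) ℤ) i j • x j = x i := by
  simp [Matrix.one_apply, ite_smul]

/-- Let `v : Fin l → ℤ` be nonzero with gcd `d > 0` of its entries and
`v = d • v'` with `v'` primitive. Then there is an integer matrix `M` invertible over `ℤ`
(unit determinant) with first row `v'`, such that for every abelian group `A` the induced
automorphism `x ↦ (∑ j, M i j • x j)_i` of `Fin l → A` maps the subgroup
`{x | ∑ i, v i • x i = 0}` bijectively onto `{y | d • y 0 = 0}`. -/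
theorem unimodular_matrix_maps_kernel_to_torsion
    {l : ℕ} (hl : 1 ≤ l) (v v' : Fin l → ℤ) (hv : v ≠ 0)
    (d : ℤ) (hd : 0 < d) (hgcd : Finset.univ.gcd v = d)
    (hvv' : v = d • v') :
    ∃ M : Matrix (Fin l) (Fin l) ℤ,
      IsUnit M.det ∧ M ⟨0, hl⟩ = v' ∧
      ∀ (A : Type u) [AddCommGroup A],
        Set.BijOn (fun (x : Fin l → A) (i : Fin l) => ∑ j, M i j • x j)
          {x : Fin l → A | ∑ i, v i • x i = 0}
          {y : Fin l → A | d • y ⟨0, hl⟩ = 0} := by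
  classical
  obtain ⟨n, rfl⟩ : ∃ n, l = n + 1 := ⟨l - 1, (Nat.succ_pred_eq_of_pos hl).symm⟩
  have h0 : (⟨0, hl⟩ : Fin (n + 1)) = 0 := rfl
  -- gcd of v' is 1
  have hd0 : d ≠ 0 := ne_of_gt hd
  have hgcd' : Finset.univ.gcd v' = 1 := by
    have h1 : Finset.univ.gcd v = normalize d * Finset.univ.gcd v' := by
      rw [hvv']
      exact
        (Finset.gcd_mul_left (s := (Finset.univ : Finset (Fin (n + 1)))) (f := v') (a := d))
    rw [hgcd, Int.normalize_of_nonneg hd.le] at h1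
    have h2 : d * 1 = d * Finset.univ.gcd v' := by rw [mul_one]; exact h1
    exact (mul_left_cancel₀ hd0 h2).symm
  have hco : ∃ u : Fin (n + 1) → ℤ, ∑ i, v' i * u i = 1 := by
    obtain ⟨u, hu⟩ := gcd_eq_combo Finset.univ v'
    exact ⟨u, by rw [← hu, hgcd']⟩
  obtain ⟨f, hf⟩ := exists_automorphism n v' hco
  set M := LinearMap.toMatrix' (f : (Fin (n + 1) → ℤ) →ₗ[ℤ] (Fin (n + 1) → ℤ)) with hM
  set N := LinearMap.toMatrix' (f.symm : (Fin (n + 1) → ℤ) →ₗ[ℤ] (Fin (n + 1) → ℤ)) with hN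
  have hMN : M * N = 1 := by
    rw [hM, hN, ← LinearMap.toMatrix'_comp, ← LinearMap.toMatrix'_id (R := ℤ) (n := Fin (n + 1))]
    congr 1
    ext x
    simp
  have hNM : N * M = 1 := by
    rw [hN, hM, ← LinearMap.toMatrix'_comp, ← LinearMap.toMatrix'_id (R := ℤ) (n := Fin (n + 1))]
    congr 1
    ext x
    simp
  have hdet : IsUnit M.det := by
    refine IsUnit.of_mul_eq_one N.det ?_
    rw [← Matrix.det_mul, hMN, Matrix.det_one]
  have hM0 : M ⟨0, hl⟩ = v' := by
    funext j
    rw [h0, hM, LinearMap.toMatrix'_apply]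
    have := hf (Pi.single j 1)
    rw [LinearEquiv.coe_coe, this]
    simp [Pi.single_apply]
  refine ⟨M, hdet, hM0, ?_⟩
  intro A _
  set T := fun (P : Matrix (Fin (n + 1)) (Fin (n + 1)) ℤ) (x : Fin (n + 1) → A)
      (i : Fin (n + 1)) => ∑ j, P i j • x j with hT
  have hTNM : ∀ x : Fin (n + 1) → A, T N (T M x) = x := by
    intro x
    funext i
    rw [hT]
    simp only
    rw [← act_mul, hNM, act_one]
  have hTMN : ∀ x : Fin (n + 1) → A, T M (T N x) = x := by
    intro x
    funext i
    rw [hT]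
    simp only
    rw [← act_mul, hMN, act_one]
  -- key: for any x, ∑ i, v i • x i = d • (T M x) 0
  have hkey : ∀ x : Fin (n + 1) → A, ∑ i, v i • x i = d • (T M x) ⟨0, hl⟩ := by
    intro x
    rw [hT]
    simp only
    rw [Finset.smul_sum]
    refine Finset.sum_congr rfl fun j _ => ?_
    rw [hM0, hvv']
    simp [mul_smul]
  constructor
  · -- MapsTo
    intro x hx
    simp only [Set.mem_setOf_eq] at hx ⊢
    rw [← hkey x]
    exact hx
  constructor
  · -- InjOn
    intro x _ y _ hxy
    have := congrArg (T N) hxy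
    rwa [hTNM, hTNM] at this
  · -- SurjOn
    intro y hy
    simp only [Set.mem_setOf_eq] at hy
    refine ⟨T N y, ?_, hTMN y⟩
    simp only [Set.mem_setOf_eq]
    rw [hkey (T N y), hTMN y]
    exact hy
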